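/- arXiv:1009.5794 — 10 statements merged into one kernel-verified Lean document; each statement's English description precedes it below -/
import Mathlib

section
/- Let p be a prime and let f = z^{-1} + z^{p-1} in the Laurent polynomial ring 𝔽_p[z, z^{-1}]. Then for every m ≥ 1, the constant term (coefficient of z^0) of f^m is zero. -/
open LaurentPolynomial Finset

theorem constant_term_pow_eq_zero (p : ℕ) (hp : p.Prime) :
    ∀ m : ℕ, 1 ≤ m →
      (((LaurentPolynomial.T (-1) + LaurentPolynomial.T ((p : ℤ) - 1) :
          LaurentPolynomial (ZMod p)) ^ m).coeff 0) = 0 := by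
  haveI := Fact.mk hp
  have hdvd : ∀ j : ℕ, 1 ≤ j → p ∣ Nat.choose (p * j) j := by
    intro j hj
    have h := Nat.add_one_mul_choose_eq (p * j - 1) (j - 1)
    have h1 : p * j - 1 + 1 = p * j := Nat.succ_pred_eq_of_pos (Nat.mul_pos hp.pos hj)
    have h2 : j - 1 + 1 = j := Nat.succ_pred_eq_of_pos hj
    rw [h1, h2] at h
    have h3 : j * (p * Nat.choose (p*j-1) (j-1)) = j * Nat.choose (p * j) j := by
      rw [show j * (p * Nat.choose (p*j-1) (j-1)) = p * j * Nat.choose (p*j-1) (j-1) from by ring, h]; ring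
    exact ⟨_, (Nat.eq_of_mul_eq_mul_left hj h3).symm⟩
  intro m hm
  rw [add_pow]
  have key : ∀ k ∈ range (m+1),
      ((T (-1) : LaurentPolynomial (ZMod p)) ^ k * T ((p:ℤ)-1) ^ (m-k) * (Nat.choose m k : LaurentPolynomial (ZMod p)))
      = AddMonoidAlgebra.single (k*(-1) + (↑(m-k))*((p:ℤ)-1)) ((Nat.choose m k : ZMod p)) := by
    intro k _
    rw [T_pow, T_pow, ← T_add, ← map_natCast (C : ZMod p →+* _), mul_comm, single_eq_C_mul_T]
  rw [Finset.sum_congr rfl key, AddMonoidAlgebra.coeff_sum, Finsupp.finset_sum_apply]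
  apply Finset.sum_eq_zero
  intro k hk
  rw [AddMonoidAlgebra.coeff_single, Finsupp.single_apply]
  split_ifs with h
  · have hkm : k ≤ m := Nat.lt_succ_iff.mp (Finset.mem_range.mp hk)
    rw [Nat.cast_sub hkm] at h
    have hz : (p:ℤ) * ((m:ℤ) - (k:ℤ)) = m := by linear_combination h
    have hn : p * (m - k) = m := by
      have := hz
      push_cast [Nat.cast_sub hkm] at this ⊢
      exact_mod_cast this
    have hj1 : 1 ≤ m - k := by
      rcases Nat.eq_zero_or_pos (m - k) with h0 | h0
      · rw [h0, Nat.mul_zero] at hn; omega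
      · exact h0
    have hks : k = m - (m - k) := by omega
    have hc : m.choose (m - k) = (p * (m - k)).choose (m - k) := by rw [hn]
    rw [hks, Nat.choose_symm (Nat.sub_le m k), hc]
    exact (ZMod.natCast_eq_zero_iff _ _).mpr (hdvd _ hj1)
  · rfl
end

section
/- Let p be a prime and let f = z^{-1} + z^{p-1} in 𝔽_p[z, z^{-1}]. Then for every k ≥ 1, the constant term of z^{-1} · f^{p^k − 1} equals (−1)^{p^{k−1}}; in particular it is nonzero in 𝔽_p. -/
open LaurentPolynomial

lemma choose_aux (p : ℕ) (hp : p.Prime) : ∀ k : ℕ,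
    ((Nat.choose (p ^ (k+1) - 1) (p ^ k) : ZMod p)) = -1 := by
  haveI := Fact.mk hp
  intro k
  induction k with
  | zero =>
    simp only [zero_add, pow_one, pow_zero]
    rw [Nat.choose_one_right]
    rw [Nat.cast_sub hp.one_lt.le, Nat.cast_one, ZMod.natCast_self, zero_sub]
  | succ k ih =>
    have h := (Choose.choose_modEq_choose_mod_mul_choose_div_nat
      (p := p) (n := p ^ (k+2) - 1) (k := p ^ (k+1)))
    have hmod : (p ^ (k+2) - 1) % p = p - 1 := by
      have : p ^ (k+2) - 1 = (p - 1) + (p ^ (k+1) - 1) * p := by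
        have h1 : 1 ≤ p ^ (k+1) := Nat.one_le_pow _ _ hp.pos
        have h2 : p ^ (k+2) = p ^ (k+1) * p := by ring
        have h3 : (p ^ (k+1) - 1) * p = p ^ (k+1) * p - p := by rw [Nat.sub_mul, one_mul]
        have h4 : p ≤ p ^ (k+2) := Nat.le_self_pow (by omega) p
        have := hp.pos
        rw [h3, ← h2]
        omega
      rw [this, Nat.add_mul_mod_self_right, Nat.mod_eq_of_lt (by have := hp.pos; omega)]
    have hdiv : (p ^ (k+2) - 1) / p = p ^ (k+1) - 1 := by
      have h1 : 1 ≤ p ^ (k+1) := Nat.one_le_pow _ _ hp.pos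
      have : p ^ (k+2) - 1 = (p - 1) + (p ^ (k+1) - 1) * p := by
        have h2 : p ^ (k+2) = p ^ (k+1) * p := by ring
        have h3 : (p ^ (k+1) - 1) * p = p ^ (k+1) * p - p := by rw [Nat.sub_mul, one_mul]
        have h4 : p ≤ p ^ (k+2) := Nat.le_self_pow (by omega) p
        have := hp.pos
        rw [h3, ← h2]
        omega
      rw [this, Nat.add_mul_div_right _ _ hp.pos, Nat.div_eq_of_lt (by have := hp.pos; omega)]
      omega
    have hmod2 : p ^ (k+1) % p = 0 := by
      simp [Nat.pow_mod]
    have hdiv2 : p ^ (k+1) / p = p ^ k := by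
      rw [pow_succ, Nat.mul_div_cancel _ hp.pos]
    rw [hmod, hdiv, hmod2, hdiv2, Nat.choose_zero_right, one_mul] at h
    calc ((Nat.choose (p ^ (k+2) - 1) (p ^ (k+1)) : ZMod p))
        = ((Nat.choose (p ^ (k+1) - 1) (p ^ k) : ZMod p)) :=
          (ZMod.natCast_eq_natCast_iff _ _ _).mpr h
      _ = -1 := ih

open LaurentPolynomial in
theorem constant_term_zinv_mul_pow (p : ℕ) (hp : p.Prime) (k : ℕ) (hk : 1 ≤ k) :
    ((LaurentPolynomial.T (-1) *
        (LaurentPolynomial.T (-1) + LaurentPolynomial.T ((p : ℤ) - 1)) ^ (p ^ k - 1) :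
        LaurentPolynomial (ZMod p)).coeff 0)
      = (-1 : ZMod p) ^ (p ^ (k - 1)) ∧
    ((LaurentPolynomial.T (-1) *
        (LaurentPolynomial.T (-1) + LaurentPolynomial.T ((p : ℤ) - 1)) ^ (p ^ k - 1) :
        LaurentPolynomial (ZMod p)).coeff 0) ≠ 0 := by
  haveI := Fact.mk hp
  have hppos := hp.pos
  have hpk : 1 ≤ p ^ k := Nat.one_le_pow _ _ hppos
  set n := p ^ k - 1 with hn
  set j0 := p ^ (k - 1) with hj0
  have hn1 : n + 1 = p ^ k := by omega
  have hj0p : j0 * p = p ^ k := by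
    rw [hj0, ← pow_succ]
    congr 1
    omega
  have hj0n : j0 ≤ n := by
    have : p ^ (k - 1) < p ^ k := Nat.pow_lt_pow_right hp.one_lt (by omega)
    omega
  have hA : (j0 : ℤ) * (p : ℤ) = (p : ℤ) ^ k := by exact_mod_cast congrArg (Nat.cast : ℕ → ℤ) hj0p
  have hB : (n : ℤ) + 1 = (p : ℤ) ^ k := by exact_mod_cast congrArg (Nat.cast : ℕ → ℤ) hn1
  have coeffeq : ∀ j : ℕ, (T (-1) * (T ((p:ℤ)-1) ^ j * T (-1:ℤ) ^ (n - j) *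
        ((n.choose j : ℕ) : LaurentPolynomial (ZMod p))))
      = AddMonoidAlgebra.single ((j:ℤ) * ((p:ℤ)-1) + ((n-j:ℕ):ℤ) * (-1) + (-1))
          ((n.choose j : ZMod p)) := by
    intro j
    simp only [single_eq_C_mul_T, T_pow,
      ← map_natCast (C : ZMod p →+* LaurentPolynomial (ZMod p)), T_add]
    ring_nf
  have main : ((T (-1) * (T (-1) + T ((p : ℤ) - 1)) ^ n : LaurentPolynomial (ZMod p)).coeff 0)
      = ((n.choose j0 : ZMod p)) := by
    rw [add_comm (T (-1) : LaurentPolynomial (ZMod p)), add_pow, Finset.mul_sum]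
    rw [AddMonoidAlgebra.coeff_sum, Finsupp.finset_sum_apply]
    rw [Finset.sum_congr rfl (fun j _ => by rw [coeffeq j, AddMonoidAlgebra.coeff_single_apply])]
    rw [Finset.sum_eq_single_of_mem j0 (Finset.mem_range.mpr (by omega))]
    · rw [if_pos]
      push_cast [Nat.cast_sub hj0n]
      linear_combination hA - hB
    · intro j hj hne
      rw [if_neg]
      intro h
      have hjn : j ≤ n := by
        have := Finset.mem_range.mp hj; omega
      push_cast [Nat.cast_sub hjn] at h
      have hjj : (j : ℤ) * (p : ℤ) = (j0 : ℤ) * (p : ℤ) := by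
        linear_combination h + hB - hA
      have : (j : ℤ) = (j0 : ℤ) :=
        mul_right_cancel₀ (by exact_mod_cast hppos.ne') hjj
      exact hne (by exact_mod_cast this)
  have hch : ((n.choose j0 : ZMod p)) = -1 := by
    have h := choose_aux p hp (k - 1)
    rw [show k - 1 + 1 = k from by omega] at h
    exact h
  have hval : (-1 : ZMod p) ^ (p ^ (k - 1)) = -1 := by
    rcases hp.eq_two_or_odd' with h2 | hodd
    · subst h2
      rw [show (-1 : ZMod 2) = 1 from rfl, one_pow]
    · exact (hodd.pow).neg_one_pow
  rw [main, hch, hval]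
  exact ⟨rfl, by simp⟩
end

section
/- The subspace of Laurent polynomials with zero constant term is not a Mathieu subspace of 𝔽_p[z, z^{-1}] for any prime p: explicitly, there exist f, g ∈ 𝔽_p[z, z^{-1}] such that the constant term of f^m is 0 for all m ≥ 1, but the constant term of g · f^m is nonzero for infinitely many m. -/
open LaurentPolynomial Finset

lemma lemA (p : ℕ) (hp : p.Prime) : ∀ s : ℕ, 1 ≤ s → (((p * s).choose s : ZMod p)) = 0 := by
  haveI := Fact.mk hp
  intro s
  induction s using Nat.strong_induction_on with
  | _ s ih =>
    intro hs
    have h := (ZMod.natCast_eq_natCast_iff _ _ p).mpr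
      (Choose.choose_modEq_choose_mod_mul_choose_div_nat (p := p) (n := p * s) (k := s))
    rw [h, Nat.mul_mod_right, Nat.mul_div_cancel_left _ hp.pos]
    rcases Nat.eq_zero_or_pos (s % p) with h0 | h0
    · have hd : p ∣ s := Nat.dvd_of_mod_eq_zero h0
      obtain ⟨t, rfl⟩ := hd
      have ht : 1 ≤ t := by
        rcases Nat.eq_zero_or_pos t with rfl | h; · simp at hs
        · exact h
      have htlt : t < p * t := by
        have := hp.two_le; nlinarith
      rw [h0, Nat.mul_div_cancel_left t hp.pos, Nat.choose_self]
      push_cast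
      simp [ih t htlt ht]
    · rw [Nat.choose_eq_zero_of_lt h0]
      push_cast
      rw [zero_mul]

lemma lemB (p : ℕ) (hp : p.Prime) : ∀ i : ℕ, (((p ^ (i+1) - 1).choose (p ^ i) : ZMod p)) ≠ 0 := by
  haveI := Fact.mk hp
  have hp2 := hp.two_le
  intro i
  induction i with
  | zero =>
    simp only [zero_add, pow_one, pow_zero, Nat.choose_one_right]
    rw [Ne, ZMod.natCast_eq_zero_iff]
    intro hdvd
    have := Nat.le_of_dvd (by omega) hdvd
    omega
  | succ i ih =>
    have h := (ZMod.natCast_eq_natCast_iff _ _ p).mpr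
      (Choose.choose_modEq_choose_mod_mul_choose_div_nat (p := p)
        (n := p ^ (i+2) - 1) (k := p ^ (i+1)))
    have hP : 1 ≤ p ^ (i+1) := Nat.one_le_pow _ _ (by omega)
    have hn : p ^ (i+2) - 1 = p * (p ^ (i+1) - 1) + (p - 1) := by
      have h1 : p ^ (i+2) = p * p ^ (i+1) := by ring
      have h2 : p * (p ^ (i+1) - 1) = p * p ^ (i+1) - p := by
        obtain ⟨Q, hQ⟩ : ∃ Q, p ^ (i+1) = Q + 1 := ⟨p ^ (i+1) - 1, by omega⟩
        rw [hQ, Nat.add_sub_cancel]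
        have h5 : p * (Q + 1) = p * Q + p := by ring
        omega
      have h3 : p ≤ p * p ^ (i+1) := Nat.le_mul_of_pos_right p hP
      omega
    have hk1 : p ^ (i+1) % p = 0 := by rw [pow_succ, Nat.mul_mod_left]
    have hk2 : p ^ (i+1) / p = p ^ i := by rw [pow_succ, Nat.mul_div_cancel _ hp.pos]
    rw [h, hn, Nat.mul_add_mod, Nat.mod_eq_of_lt (by omega), Nat.mul_add_div hp.pos,
      Nat.div_eq_of_lt (by omega), Nat.add_zero, hk1, hk2, Nat.choose_zero_right]
    push_cast
    rw [one_mul]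
    exact ih

lemma key_coeff (p m : ℕ) (c : ℤ) :
    ((LaurentPolynomial.T c * (T (-1) + T ((p:ℤ)-1)) ^ m :
      LaurentPolynomial (ZMod p)).coeff 0) =
    ∑ k ∈ Finset.range (m+1),
      if ((p:ℤ) * k - m + c = 0) then (m.choose k : ZMod p) else 0 := by
  rw [add_comm (T (-1)) (T ((p:ℤ)-1)), add_pow, Finset.mul_sum]
  rw [AddMonoidAlgebra.coeff_sum, Finsupp.finset_sum_apply]
  refine Finset.sum_congr rfl fun k hk => ?_
  rw [Finset.mem_range, Nat.lt_succ_iff] at hk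
  rw [T_pow, T_pow, ← mul_assoc, ← T_add, ← T_add,
    ← map_natCast (LaurentPolynomial.C (R := ZMod p)) (m.choose k),
    LaurentPolynomial.T_mul, ← single_eq_C_mul_T, AddMonoidAlgebra.coeff_single, Finsupp.single_apply]
  refine if_congr ?_ rfl rfl
  rw [Nat.cast_sub hk]
  constructor <;> intro h <;> ring_nf at h ⊢ <;> linarith

theorem laurent_not_mathieu (p : ℕ) (hp : p.Prime) :
    ∃ f g : LaurentPolynomial (ZMod p),
      (∀ m : ℕ, 1 ≤ m → ((f ^ m).coeff 0) = 0) ∧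
      (∀ N : ℕ, ∃ m : ℕ, N ≤ m ∧ ((g * f ^ m).coeff 0) ≠ 0) := by
  have hp2 := hp.two_le
  refine ⟨T (-1) + T ((p:ℤ)-1), T (-1), ?_, ?_⟩
  · intro m hm
    have h := key_coeff p m 0
    rw [T_zero, one_mul] at h
    rw [h]
    refine Finset.sum_eq_zero fun k hk => ?_
    split_ifs with hcond
    · have hmk : m = p * k := by exact_mod_cast (by linarith : (m : ℤ) = (p : ℤ) * k)
      have hk1 : 1 ≤ k := by
        rcases Nat.eq_zero_or_pos k with rfl | h'; · omega
        · exact h'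
      rw [hmk]
      exact lemA p hp k hk1
    · rfl
  · intro N
    set m := p ^ (N + 1) - 1 with hm
    have hpow : 1 ≤ p ^ (N + 1) := Nat.one_le_pow _ _ (by omega)
    have hNlt : N < p ^ (N + 1) := by
      calc N < 2 ^ (N+1) := by
              have := Nat.lt_two_pow_self (n := N)
              have : 2 ^ N ≤ 2 ^ (N+1) := Nat.pow_le_pow_right (by omega) (by omega)
              omega
        _ ≤ p ^ (N+1) := Nat.pow_le_pow_left hp2 _
    refine ⟨m, by omega, ?_⟩
    have h := key_coeff p m (-1)
    rw [h]
    have hmem : p ^ N ∈ Finset.range (m + 1) := by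
      rw [Finset.mem_range]
      have h1 : p ^ N < p ^ (N+1) := Nat.pow_lt_pow_right (by omega) (by omega)
      omega
    have hm1 : m + 1 = p ^ (N+1) := by omega
    rw [Finset.sum_eq_single_of_mem (p ^ N) hmem ?side]
    · rw [if_pos ?cond]
      · exact lemB p hp N
      case cond =>
        have : ((p:ℤ)) * (p ^ N : ℕ) = ((p ^ (N+1) : ℕ) : ℤ) := by push_cast; ring
        have hmz : (m : ℤ) = ((p ^ (N+1) : ℕ) : ℤ) - 1 := by
          rw [hm, Nat.cast_sub hpow]; push_cast; ring
        rw [this, hmz]; ring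
    case side =>
      intro k hk hne
      rw [if_neg]
      intro hcond
      apply hne
      have : (p : ℤ) * k = ((p ^ (N+1) : ℕ) : ℤ) := by
        have hmz : (m : ℤ) = ((p ^ (N+1) : ℕ) : ℤ) - 1 := by
          rw [hm, Nat.cast_sub hpow]; push_cast; ring
        rw [hmz] at hcond; linarith
      have hnat : p * k = p ^ (N+1) := by exact_mod_cast this
      have : p * k = p * p ^ N := by rw [hnat, pow_succ']
      exact Nat.eq_of_mul_eq_mul_left hp.pos this
end

section
/- Let G be a finite group and R a commutative ring, and let V_G be the set of elements of the group algebra R[G] whose coefficient of the identity element 1_G is zero. If V_G is a (two-sided) Mathieu subspace of R[G], then every u ∈ R[G] with u^m ∈ V_G for all m ≥ 1 is nilpotent. -/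
theorem mathieu_imp_nilpotent {R G : Type*} [CommRing R] [Group G] [Fintype G]
    (hM : ∀ a b c : MonoidAlgebra R G, (∀ m : ℕ, 1 ≤ m → (a ^ m).coeff 1 = 0) →
      ∃ N : ℕ, ∀ m : ℕ, N ≤ m → (b * a ^ m * c).coeff 1 = 0)
    (u : MonoidAlgebra R G) (hu : ∀ m : ℕ, 1 ≤ m → (u ^ m).coeff 1 = 0) :
    IsNilpotent u := by
  choose N hN using fun g : G => hM u (MonoidAlgebra.single g⁻¹ 1) 1 hu
  refine ⟨Finset.univ.sup N, ?_⟩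
  ext g
  have h := hN g (Finset.univ.sup N) (Finset.le_sup (Finset.mem_univ g))
  simpa [MonoidAlgebra.coeff_single_mul_apply] using h
end

section
/- Let G be a finite group and R a commutative ring. If every u ∈ R[G] satisfying u^m ∈ V_G for all m ≥ 1 is nilpotent, then V_G is a Mathieu subspace of R[G], where V_G is the set of elements of R[G] with zero coefficient at 1_G. -/
theorem nilpotent_imp_mathieu {R G : Type*} [CommRing R] [Group G] [Fintype G]
    (hnil : ∀ u : MonoidAlgebra R G, (∀ m : ℕ, 1 ≤ m → (u ^ m).coeff 1 = 0) → IsNilpotent u) :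
    ∀ a b c : MonoidAlgebra R G, (∀ m : ℕ, 1 ≤ m → (a ^ m).coeff 1 = 0) →
      ∃ N : ℕ, ∀ m : ℕ, N ≤ m → (b * a ^ m * c).coeff 1 = 0 := by
  intro a b c ha
  obtain ⟨n, hn⟩ := hnil a ha
  refine ⟨n, fun m hm => ?_⟩
  have : a ^ m = 0 := by
    calc a ^ m = a ^ n * a ^ (m - n) := by rw [← pow_add, Nat.add_sub_cancel' hm]
    _ = 0 := by rw [hn, zero_mul]
  simp [this]
end

section
/- Let G be a finite group and R an integral domain of characteristic 0, or of characteristic p > |G|. Then any u ∈ R[G] such that the coefficient of 1_G in u^m is zero for all m ≥ 1 is nilpotent. -/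
open Module LinearMap Set

section CoreLemma

variable {K V : Type*} [Field K] [AddCommGroup V] [Module K V] [FiniteDimensional K V]

lemma trace_restrict_pow_maxGen (f : Module.End K V) (μ : K) (m : ℕ)
    (h : MapsTo f (f.maxGenEigenspace μ) (f.maxGenEigenspace μ)) :
    LinearMap.trace K _ ((f.restrict h) ^ m)
      = μ ^ m * (finrank K (f.maxGenEigenspace μ) : K) := by
  induction m with
  | zero => simp [trace_one]
  | succ m ih =>
    have h2 : MapsTo (f - algebraMap K (Module.End K V) μ)
        (f.maxGenEigenspace μ) (f.maxGenEigenspace μ) :=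
      Module.End.mapsTo_maxGenEigenspace_of_comm (Algebra.mul_sub_algebraMap_commutes f μ) μ
    have halg : MapsTo (algebraMap K (Module.End K V) μ)
        (f.maxGenEigenspace μ) (f.maxGenEigenspace μ) := fun x hx => by
      simpa [Module.algebraMap_end_apply] using Submodule.smul_mem _ μ hx
    have hnil : IsNilpotent
        (f.restrict h - algebraMap K (Module.End K (f.maxGenEigenspace μ)) μ) := by
      have hle := f.isNilpotent_restrict_maxGenEigenspace_sub_algebraMap μ h2
      convert hle using 1
      ext x; rfl
    rw [pow_succ, Module.End.mul_eq_comp,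
      trace_comp_eq_mul_of_commute_of_isNilpotent μ ((Commute.refl _).pow_left m) hnil, ih]
    ring

end CoreLemma

lemma isNilpotent_of_trace_pow_eq_zero {K V : Type*} [Field K] [IsAlgClosed K]
    [AddCommGroup V] [Module K V] [FiniteDimensional K V]
    (hd : ∀ d : ℕ, 1 ≤ d → d ≤ finrank K V → (d : K) ≠ 0)
    (f : Module.End K V) (hf : ∀ m : ℕ, 1 ≤ m → LinearMap.trace K V (f ^ m) = 0) :
    IsNilpotent f := by
  classical
  have hind := f.independent_maxGenEigenspace
  have htop := f.iSup_maxGenEigenspace_eq_top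
  have hds := DirectSum.isInternal_submodule_of_iSupIndep_of_iSup_eq_top hind htop
  have h_fin : {μ : K | f.maxGenEigenspace μ ≠ ⊥}.Finite :=
    WellFoundedGT.finite_ne_bot_of_iSupIndep hind
  have hM1 : ∀ μ : K, MapsTo f (f.maxGenEigenspace μ) (f.maxGenEigenspace μ) := fun μ =>
    Module.End.mapsTo_maxGenEigenspace_of_comm rfl μ
  have hMapsTo : ∀ (m : ℕ) (μ : K),
      MapsTo (f ^ m) (f.maxGenEigenspace μ) (f.maxGenEigenspace μ) := fun m μ =>
    Module.End.mapsTo_maxGenEigenspace_of_comm ((Commute.refl f).pow_right m) μ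
  set d : K → K := fun μ => (finrank K (f.maxGenEigenspace μ) : K) with hdDef
  have key : ∀ m : ℕ, 1 ≤ m → ∑ μ ∈ h_fin.toFinset, μ ^ m * d μ = 0 := by
    intro m hm
    rw [← hf m hm, LinearMap.trace_eq_sum_trace_restrict' hds h_fin (hMapsTo m)]
    refine Finset.sum_congr rfl fun μ _ => ?_
    rw [← Module.End.pow_restrict m (hM1 μ)]
    exact (trace_restrict_pow_maxGen f μ m (hM1 μ)).symm
  set t : Finset K := h_fin.toFinset.erase 0 with htDef
  have key' : ∀ m : ℕ, 1 ≤ m → ∑ μ ∈ t, μ ^ m * d μ = 0 := by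
    intro m hm
    rw [← key m hm]
    apply Finset.sum_erase
    simp [zero_pow (by omega : m ≠ 0)]
  have hd' : ∀ μ ∈ t, μ * d μ ≠ 0 := by
    intro μ hμ
    have hμ0 : μ ≠ 0 := (Finset.mem_erase.mp hμ).1
    have hμne : f.maxGenEigenspace μ ≠ ⊥ := by
      simpa using (Set.Finite.mem_toFinset h_fin).mp (Finset.mem_erase.mp hμ).2
    have h1 : 1 ≤ finrank K (f.maxGenEigenspace μ) := by
      exact finrank_pos_iff.mpr (Submodule.nontrivial_iff_ne_bot.mpr hμne)
    have h2 : finrank K (f.maxGenEigenspace μ) ≤ finrank K V := Submodule.finrank_le _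
    exact mul_ne_zero hμ0 (hd _ h1 h2)
  have htempty : t = ∅ := by
    by_contra hne
    have hne' : t.Nonempty := Finset.nonempty_of_ne_empty hne
    have hr : 0 < t.card := Finset.card_pos.mpr hne'
    set r := t.card with hrDef
    let e : Fin r ≃ t := t.equivFin.symm
    let A : Matrix (Fin r) (Fin r) K := fun i j => ((e j : K)) ^ (i : ℕ)
    let w : Fin r → K := fun j => (e j : K) * d (e j)
    have hAw : A.mulVec w = 0 := by
      funext i
      set F : K → K := fun μ => μ ^ ((i : ℕ) + 1) * d μ with hF
      have h1 : ∀ j : Fin r, A i j * w j = F (e j) := by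
        intro j; simp only [A, w, F, pow_succ]; ring
      have h2 : ∑ j, A i j * w j = ∑ μ : t, F μ := by
        rw [Finset.sum_congr rfl fun j _ => h1 j]
        exact Fintype.sum_equiv e _ _ fun j => rfl
      have h3 : (∑ μ : t, F μ) = ∑ μ ∈ t, F μ := Finset.sum_coe_sort t F
      show ∑ j, A i j * w j = 0
      rw [h2, h3]
      exact key' _ (Nat.le_add_left 1 _)
    have hdet : A.det ≠ 0 := by
      have hA : A = (Matrix.vandermonde fun j : Fin r => (e j : K)).transpose := by
        ext i j; simp [A, Matrix.vandermonde_apply, Matrix.transpose_apply]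
      rw [hA, Matrix.det_transpose, Matrix.det_vandermonde]
      rw [Finset.prod_ne_zero_iff]
      intro i _
      rw [Finset.prod_ne_zero_iff]
      intro j hj
      have hij : i ≠ j := by
        intro hij; subst hij; exact absurd (Finset.mem_Ioi.mp hj) (lt_irrefl _)
      have : (e j : K) ≠ (e i : K) := by
        intro hc
        exact hij (e.injective (Subtype.ext hc)).symm
      exact sub_ne_zero.mpr this
    have hw0 : w = 0 := Matrix.eq_zero_of_mulVec_eq_zero hdet hAw
    have := congrFun hw0 ⟨0, hr⟩
    exact hd' _ (e ⟨0, hr⟩).2 this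
  have hbot : ∀ μ : K, μ ≠ 0 → f.maxGenEigenspace μ = ⊥ := by
    intro μ hμ
    by_contra hb
    have : μ ∈ t := Finset.mem_erase.mpr ⟨hμ, (Set.Finite.mem_toFinset h_fin).mpr hb⟩
    rw [htempty] at this
    exact absurd this (Finset.notMem_empty μ)
  have htop0 : f.maxGenEigenspace 0 = ⊤ := by
    rw [← htop]
    apply le_antisymm (le_iSup _ 0)
    apply iSup_le
    intro μ
    rcases eq_or_ne μ 0 with h | h
    · rw [h]
    · rw [hbot μ h]; exact bot_le
  refine ((LinearMap.charpoly_nilpotent_tfae f).out 0 2).mpr fun x => ?_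
  have hx : x ∈ f.maxGenEigenspace 0 := htop0 ▸ Submodule.mem_top
  rw [Module.End.mem_maxGenEigenspace] at hx
  obtain ⟨k, hk⟩ := hx
  exact ⟨k, by simpa using hk⟩

section MapRange

variable {R S : Type*} [Semiring R] [Semiring S] {G : Type*} [Group G]

/-- Coefficientwise map of monoid algebras induced by a ring hom. -/
noncomputable def MonoidAlgebra.mapCoeff (φ : R →+* S) :
    MonoidAlgebra R G →+* MonoidAlgebra S G :=
  MonoidAlgebra.liftNCRingHom (MonoidAlgebra.singleOneRingHom.comp φ) (MonoidAlgebra.of S G)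
    (fun r g => by
      show MonoidAlgebra.single 1 (φ r) * MonoidAlgebra.single g 1
        = MonoidAlgebra.single g 1 * MonoidAlgebra.single 1 (φ r)
      rw [MonoidAlgebra.single_mul_single, MonoidAlgebra.single_mul_single,
        one_mul, mul_one, one_mul, mul_one])

lemma MonoidAlgebra.mapCoeff_single (φ : R →+* S) (a : G) (b : R) :
    MonoidAlgebra.mapCoeff φ (MonoidAlgebra.single a b) = MonoidAlgebra.single a (φ b) := by
  show MonoidAlgebra.liftNC _ _ _ = _
  rw [MonoidAlgebra.liftNC_single]
  show MonoidAlgebra.single 1 (φ b) * MonoidAlgebra.single a 1 = _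
  rw [MonoidAlgebra.single_mul_single, one_mul, mul_one]

lemma MonoidAlgebra.mapCoeff_apply (φ : R →+* S) (u : MonoidAlgebra R G) (x : G) :
    (MonoidAlgebra.mapCoeff φ u).coeff x = φ (u.coeff x) := by
  induction u using MonoidAlgebra.induction_linear with
  | zero => simp
  | add f g hf hg => rw [map_add, MonoidAlgebra.coeff_add, Finsupp.add_apply, hf, hg, MonoidAlgebra.coeff_add, Finsupp.add_apply, map_add]
  | single a b =>
      classical
      rw [MonoidAlgebra.mapCoeff_single]
      show Finsupp.single a (φ b) x = φ (Finsupp.single a b x)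
      rw [Finsupp.single_apply, Finsupp.single_apply, apply_ite φ, map_zero]

end MapRange

section TraceMulLeft

variable {K : Type*} [Field K] {G : Type*} [Group G] [Fintype G]

noncomputable instance : FiniteDimensional K (MonoidAlgebra K G) := by
  classical
  exact Module.Finite.of_basis (MonoidAlgebra.basis G K)

lemma finrank_monoidAlgebra : finrank K (MonoidAlgebra K G) = Fintype.card G := by
  classical
  exact finrank_eq_card_basis (MonoidAlgebra.basis G K)

lemma trace_mulLeft (w : MonoidAlgebra K G) :
    LinearMap.trace K (MonoidAlgebra K G) (LinearMap.mulLeft K w)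
      = (Fintype.card G : K) * w.coeff 1 := by
  classical
  let b : Basis G K (MonoidAlgebra K G) := MonoidAlgebra.basis G K
  rw [LinearMap.trace_eq_matrix_trace K b]
  rw [Matrix.trace]
  have hdiag : ∀ g : G, (LinearMap.toMatrix b b (LinearMap.mulLeft K w)).diag g = w.coeff 1 := by
    intro g
    rw [Matrix.diag_apply, LinearMap.toMatrix_apply]
    have hb : b g = MonoidAlgebra.single g 1 := rfl
    rw [hb, LinearMap.mulLeft_apply]
    have : b.repr (w * MonoidAlgebra.single g 1) = (w * MonoidAlgebra.single g 1).coeff := rfl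
    rw [this]
    rw [MonoidAlgebra.coeff_mul_single_apply]
    rw [mul_inv_cancel, mul_one]
  rw [Finset.sum_congr rfl fun g _ => hdiag g]
  simp [mul_comm]

end TraceMulLeft

theorem const_term_zero_imp_nilpotent {R G : Type*} [CommRing R] [IsDomain R]
    [Group G] [Fintype G]
    (hchar : ringChar R = 0 ∨ Fintype.card G < ringChar R)
    (u : MonoidAlgebra R G) (hu : ∀ m : ℕ, 1 ≤ m → (u ^ m).coeff 1 = 0) :
    IsNilpotent u := by
  classical
  let F := FractionRing R
  let K := AlgebraicClosure F
  let φ : R →+* K := (algebraMap F K).comp (algebraMap R F)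
  have hφ : Function.Injective φ :=
    (RingHom.injective (algebraMap F K)).comp (IsFractionRing.injective R F)
  have hCharK : CharP K (ringChar R) := by
    have : CharP R (ringChar R) := ringChar.charP R
    exact charP_of_injective_ringHom hφ (ringChar R)
  have hd : ∀ d : ℕ, 1 ≤ d → d ≤ finrank K (MonoidAlgebra K G) → (d : K) ≠ 0 := by
    intro d hd1 hd2 hzero
    rw [finrank_monoidAlgebra] at hd2
    rw [CharP.cast_eq_zero_iff K (ringChar R) d] at hzero
    rcases hchar with h0 | hlt
    · rw [h0, Nat.zero_dvd] at hzero
      omega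
    · have := Nat.le_of_dvd (by omega) hzero
      omega
  set v : MonoidAlgebra K G := MonoidAlgebra.mapCoeff φ u with hv
  have hvm : ∀ m : ℕ, 1 ≤ m → (v ^ m).coeff 1 = 0 := by
    intro m hm
    rw [hv, ← map_pow, MonoidAlgebra.mapCoeff_apply, hu m hm, map_zero]
  have htr : ∀ m : ℕ, 1 ≤ m →
      LinearMap.trace K (MonoidAlgebra K G) ((LinearMap.mulLeft K v) ^ m) = 0 := by
    intro m hm
    rw [LinearMap.pow_mulLeft, trace_mulLeft, hvm m hm, mul_zero]
  obtain ⟨N, hN⟩ := isNilpotent_of_trace_pow_eq_zero hd (LinearMap.mulLeft K v) htr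
  have hvN : v ^ N = 0 := by
    have := congrFun (congrArg DFunLike.coe hN) 1
    rw [LinearMap.pow_mulLeft] at this
    simpa using this
  refine ⟨N, ?_⟩
  have : MonoidAlgebra.mapCoeff φ (u ^ N) = 0 := by rw [map_pow, ← hv, hvN]
  ext x
  have hx : φ ((u ^ N).coeff x) = 0 := by
    rw [← MonoidAlgebra.mapCoeff_apply φ, this, MonoidAlgebra.coeff_zero, Finsupp.zero_apply]
  have hux : (u ^ N).coeff x = 0 := hφ (by rw [hx, map_zero])
  rw [hux, MonoidAlgebra.coeff_zero, Finsupp.zero_apply]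
end

section
/- Let G be a finite group and R an integral domain whose characteristic is 0 or a prime p with p > |G|. Then V_G, the set of elements of R[G] with zero coefficient at 1_G, is a Mathieu subspace of R[G]. -/
open Module LinearMap Set

section TraceAux

variable {K V : Type*} [Field K] [AddCommGroup V] [Module K V] [FiniteDimensional K V]

lemma aux_trace_restrict_pow (φ : Module.End K V) (μ : K) (m : ℕ)
    (hh : Set.MapsTo φ (φ.maxGenEigenspace μ) (φ.maxGenEigenspace μ)) :
    LinearMap.trace K _ ((φ.restrict hh) ^ m)
      = μ ^ m * (finrank K (φ.maxGenEigenspace μ) : K) := by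
  induction m with
  | zero => simp [LinearMap.trace_one]
  | succ n ih =>
    have hnil : IsNilpotent (φ.restrict hh - algebraMap K (Module.End K (φ.maxGenEigenspace μ)) μ) := by
      have h2 : Set.MapsTo (φ - algebraMap K (Module.End K V) μ)
          (φ.maxGenEigenspace μ) (φ.maxGenEigenspace μ) :=
        Module.End.mapsTo_maxGenEigenspace_of_comm (Algebra.mul_sub_algebraMap_commutes φ μ) μ
      have := φ.isNilpotent_restrict_maxGenEigenspace_sub_algebraMap μ h2
      convert this using 1
      ext x
      rfl
    have hcomm : Commute ((φ.restrict hh) ^ n) (φ.restrict hh) := (Commute.refl _).pow_left n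
    calc LinearMap.trace K _ ((φ.restrict hh) ^ (n + 1))
        = LinearMap.trace K _ (((φ.restrict hh) ^ n) ∘ₗ (φ.restrict hh)) := by
          rw [pow_succ, Module.End.mul_eq_comp]
      _ = μ * LinearMap.trace K _ ((φ.restrict hh) ^ n) :=
          trace_comp_eq_mul_of_commute_of_isNilpotent μ hcomm hnil
      _ = μ ^ (n + 1) * (finrank K (φ.maxGenEigenspace μ) : K) := by rw [ih]; ring

lemma aux_isNilpotent_of_trace_pow [IsAlgClosed K] (φ : Module.End K V)
    (hchar : ∀ d : ℕ, 0 < d → d ≤ finrank K V → (d : K) ≠ 0)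
    (htr : ∀ m : ℕ, 1 ≤ m → LinearMap.trace K V (φ ^ m) = 0) :
    IsNilpotent φ := by
  classical
  have hmapsTo : ∀ μ, Set.MapsTo φ (φ.maxGenEigenspace μ) (φ.maxGenEigenspace μ) :=
    fun μ => φ.mapsTo_maxGenEigenspace_of_comm rfl μ
  have h_fin : {μ | φ.maxGenEigenspace μ ≠ ⊥}.Finite :=
    WellFoundedGT.finite_ne_bot_of_iSupIndep φ.independent_maxGenEigenspace
  have hds : DirectSum.IsInternal fun μ : K => φ.maxGenEigenspace μ :=
    DirectSum.isInternal_submodule_of_iSupIndep_of_iSup_eq_top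
      φ.independent_maxGenEigenspace φ.iSup_maxGenEigenspace_eq_top
  -- trace formula
  have htrace : ∀ m : ℕ, LinearMap.trace K V (φ ^ m)
      = ∑ μ ∈ h_fin.toFinset, μ ^ m * (finrank K (φ.maxGenEigenspace μ) : K) := by
    intro m
    have hfm : ∀ μ, Set.MapsTo (φ ^ m) (φ.maxGenEigenspace μ) (φ.maxGenEigenspace μ) :=
      fun μ => φ.mapsTo_maxGenEigenspace_of_comm (Commute.pow_right rfl m) μ
    rw [trace_eq_sum_trace_restrict' hds h_fin hfm]
    refine Finset.sum_congr rfl fun μ _ => ?_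
    have : (φ ^ m).restrict (hfm μ) = (φ.restrict (hmapsTo μ)) ^ m := by
      exact (Module.End.pow_restrict m (hmapsTo μ)).symm
    rw [this, aux_trace_restrict_pow]
  -- nonzero eigenvalues all trivial
  have hzero : ∀ μ : K, μ ≠ 0 → φ.maxGenEigenspace μ = ⊥ := by
    by_contra hcon
    push_neg at hcon
    obtain ⟨μ₀, hμ₀ne, hμ₀bot⟩ := hcon
    set T : Finset K := h_fin.toFinset.filter (· ≠ 0) with hT
    set r := T.card with hr
    set e := T.equivFin with he
    set v : Fin r → K := fun i => (e.symm i : K) with hv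
    have hvinj : Function.Injective v := by
      intro i j hij
      exact e.symm.injective (Subtype.ext hij)
    set w : Fin r → K := fun i =>
      (finrank K (φ.maxGenEigenspace (v i)) : K) * v i with hw
    have hsum : ∀ j : Fin r, ∑ i : Fin r, v i ^ (j : ℕ) * w i = 0 := by
      intro j
      have h1 := htr (j.1 + 1) (Nat.succ_le_succ (Nat.zero_le _))
      rw [htrace (j.1 + 1)] at h1
      have h2 : ∑ μ ∈ T, μ ^ (j.1 + 1) * (finrank K (φ.maxGenEigenspace μ) : K) = 0 := by
        rw [← h1]
        refine Finset.sum_filter_of_ne fun μ _ hne => ?_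
        intro h0
        apply hne
        rw [h0, zero_pow (Nat.succ_ne_zero _), zero_mul]
      calc ∑ i : Fin r, v i ^ (j : ℕ) * w i
          = ∑ i : Fin r, v i ^ (j.1 + 1) * (finrank K (φ.maxGenEigenspace (v i)) : K) := by
            refine Finset.sum_congr rfl fun i _ => ?_
            rw [hw]; ring
        _ = ∑ x : T, (x : K) ^ (j.1 + 1) * (finrank K (φ.maxGenEigenspace (x : K)) : K) :=
            Equiv.sum_comp e.symm (fun x : T => (x : K) ^ (j.1 + 1) * (finrank K (φ.maxGenEigenspace (x : K)) : K))
        _ = ∑ μ ∈ T, μ ^ (j.1 + 1) * (finrank K (φ.maxGenEigenspace μ) : K) :=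
            Finset.sum_coe_sort T (fun μ : K => μ ^ (j.1 + 1) * (finrank K (φ.maxGenEigenspace μ) : K))
        _ = 0 := h2
    have hmv : (Matrix.vandermonde v).transpose.mulVec w = 0 := by
      funext j
      have := hsum j
      simpa [Matrix.mulVec, dotProduct, Matrix.vandermonde] using this
    have hw0 : w = 0 :=
      Matrix.eq_zero_of_mulVec_eq_zero
        (by rw [Matrix.det_transpose]; exact Matrix.det_vandermonde_ne_zero_iff.mpr hvinj)
        hmv
    -- contradiction at μ₀
    have hμ₀T : μ₀ ∈ T := by
      rw [hT, Finset.mem_filter]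
      exact ⟨h_fin.mem_toFinset.mpr hμ₀bot, hμ₀ne⟩
    set i₀ := e ⟨μ₀, hμ₀T⟩ with hi₀
    have hvi₀ : v i₀ = μ₀ := by
      show ((e.symm (e ⟨μ₀, hμ₀T⟩) : T) : K) = μ₀
      rw [Equiv.symm_apply_apply]
    have h0 : (finrank K (φ.maxGenEigenspace μ₀) : K) * μ₀ = 0 := by
      have h1 := congrFun hw0 i₀
      simp only [hw, Pi.zero_apply] at h1
      rw [hvi₀] at h1
      exact h1
    rcases mul_eq_zero.mp h0 with h | h
    · refine hchar _ ?_ (Submodule.finrank_le _) h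
      rw [Module.finrank_pos_iff]
      exact Submodule.nontrivial_iff_ne_bot.mpr hμ₀bot
    · exact hμ₀ne h
  -- conclude nilpotency
  have htop : φ.maxGenEigenspace 0 = ⊤ := by
    rw [eq_top_iff, ← φ.iSup_maxGenEigenspace_eq_top]
    refine iSup_le fun μ => ?_
    rcases eq_or_ne μ 0 with rfl | hμ
    · exact le_rfl
    · rw [hzero μ hμ]; exact bot_le
  have hx : ∀ x : V, ∃ k : ℕ, (φ ^ k) x = 0 := by
    intro x
    have hxmem : x ∈ φ.maxGenEigenspace 0 := htop ▸ Submodule.mem_top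
    rw [Module.End.mem_maxGenEigenspace] at hxmem
    obtain ⟨k, hk⟩ := hxmem
    exact ⟨k, by simpa using hk⟩
  exact (LinearMap.isNilpotent_iff_charpoly φ).mpr ((LinearMap.charpoly_eq_X_pow_iff φ).mpr hx)

end TraceAux

section CoeffMap

variable {R S G : Type*} [CommSemiring R] [CommSemiring S] [Group G]

/-- Apply a ring hom to coefficients of a monoid algebra element. -/
noncomputable def coeffRingHom (f : R →+* S) : MonoidAlgebra R G →+* MonoidAlgebra S G :=
  MonoidAlgebra.liftNCRingHom (MonoidAlgebra.singleOneRingHom.comp f) (MonoidAlgebra.of S G)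
    (fun r g =>
      MonoidAlgebra.single_commute_single (Commute.one_left g) (Commute.one_right (f r)))

lemma coeffRingHom_single (f : R →+* S) (a : G) (b : R) :
    coeffRingHom f (MonoidAlgebra.single a b) = MonoidAlgebra.single a (f b) := by
  show MonoidAlgebra.liftNC _ _ (MonoidAlgebra.single a b) = _
  rw [MonoidAlgebra.liftNC_single]
  show MonoidAlgebra.single 1 (f b) * MonoidAlgebra.single a 1 = _
  rw [MonoidAlgebra.single_mul_single, one_mul, mul_one]

lemma coeffRingHom_eq_mapRange (f : R →+* S) (x : MonoidAlgebra R G) :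
    coeffRingHom f x = MonoidAlgebra.ofCoeff (Finsupp.mapRange f f.map_zero x.coeff) := by
  induction x using MonoidAlgebra.induction with
  | zero => simp [map_zero]
  | single_add a b x _ _ ih =>
    rw [MonoidAlgebra.coeff_add, Finsupp.mapRange_add f.map_add, MonoidAlgebra.ofCoeff_add, map_add, ih]
    congr 1
    rw [MonoidAlgebra.coeff_single, Finsupp.mapRange_single, MonoidAlgebra.ofCoeff_single]
    exact coeffRingHom_single f a b

lemma coeffRingHom_apply_coeff (f : R →+* S) (x : MonoidAlgebra R G) (h : G) :
    (coeffRingHom f x).coeff h = f (x.coeff h) := by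
  rw [coeffRingHom_eq_mapRange]
  exact Finsupp.mapRange_apply (hf := f.map_zero)

end CoeffMap

section TraceMulLeft

variable {L G : Type*} [CommRing L] [Group G] [Fintype G] [DecidableEq G]

noncomputable def maBasis : Basis G L (MonoidAlgebra L G) := MonoidAlgebra.basis G L

lemma trace_mulLeft_eq (x : MonoidAlgebra L G) :
    LinearMap.trace L (MonoidAlgebra L G) (LinearMap.mulLeft L x)
      = Fintype.card G • (x.coeff 1) := by
  haveI : Module.Finite L (MonoidAlgebra L G) := Module.Finite.of_basis (maBasis (L := L) (G := G))
  rw [LinearMap.trace_eq_matrix_trace L (maBasis (L := L) (G := G))]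
  rw [Matrix.trace]
  have hdiag : ∀ g : G, (LinearMap.toMatrix maBasis maBasis (LinearMap.mulLeft L x)).diag g = x.coeff 1 := by
    intro g
    rw [Matrix.diag_apply, LinearMap.toMatrix_apply]
    show (x * MonoidAlgebra.single g 1 : MonoidAlgebra L G).coeff g = x.coeff 1
    rw [MonoidAlgebra.coeff_mul_single_apply]
    simp
  simp_rw [hdiag]
  simp [Finset.sum_const]

end TraceMulLeft

theorem VG_mathieu_of_char {R G : Type*} [CommRing R] [IsDomain R] [Group G] [Fintype G]
    (hchar : ringChar R = 0 ∨ ((ringChar R).Prime ∧ Fintype.card G < ringChar R)) :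
    ∀ a b c : MonoidAlgebra R G, (∀ m : ℕ, 1 ≤ m → (a ^ m).coeff 1 = 0) →
      ∃ N : ℕ, ∀ m : ℕ, N ≤ m → (b * a ^ m * c).coeff 1 = 0 := by
  classical
  intro a b c ha
  set K := FractionRing R
  set L := AlgebraicClosure K
  set f : R →+* L := (algebraMap K L).comp (algebraMap R K) with hfdef
  have hf : Function.Injective f :=
    (algebraMap K L).injective.comp (IsFractionRing.injective R K)
  haveI : CharP L (ringChar R) := by
    haveI : CharP R (ringChar R) := ringChar.charP R
    exact charP_of_injective_ringHom hf (ringChar R)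
  -- the characteristic condition transported to L
  have hchar' : ∀ d : ℕ, 0 < d → d ≤ Fintype.card G → (d : L) ≠ 0 := by
    rcases hchar with h0 | ⟨hp, hlt⟩
    · haveI : CharP L 0 := by rw [← h0]; infer_instance
      haveI : CharZero L := CharP.charP_to_charZero L
      intro d hd _
      exact Nat.cast_ne_zero.mpr hd.ne'
    · intro d hd hle
      rw [Ne, CharP.cast_eq_zero_iff L (ringChar R) d]
      exact Nat.not_dvd_of_pos_of_lt hd (lt_of_le_of_lt hle hlt)
  set A : MonoidAlgebra L G := coeffRingHom f a with hAdef
  have hA : ∀ m : ℕ, 1 ≤ m → (A ^ m).coeff 1 = 0 := by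
    intro m hm
    rw [hAdef, ← map_pow, coeffRingHom_apply_coeff, ha m hm, map_zero]
  haveI hfd : Module.Finite L (MonoidAlgebra L G) :=
    Module.Finite.of_basis (maBasis (L := L) (G := G))
  have hfinrank : Module.finrank L (MonoidAlgebra L G) = Fintype.card G :=
    Module.finrank_eq_card_basis (maBasis (L := L) (G := G))
  have htr : ∀ m : ℕ, 1 ≤ m →
      LinearMap.trace L (MonoidAlgebra L G) ((LinearMap.mulLeft L A) ^ m) = 0 := by
    intro m hm
    rw [LinearMap.pow_mulLeft, trace_mulLeft_eq, hA m hm, smul_zero]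
  have hnil : IsNilpotent (LinearMap.mulLeft L A) := by
    refine aux_isNilpotent_of_trace_pow _ (fun d hd hdle => hchar' d hd ?_) htr
    rwa [hfinrank] at hdle
  obtain ⟨n, hn⟩ := hnil
  have hAn : A ^ n = 0 := by
    rw [LinearMap.pow_mulLeft] at hn
    have := LinearMap.congr_fun hn (1 : MonoidAlgebra L G)
    simpa using this
  refine ⟨n, fun m hm => ?_⟩
  have ham : a ^ m = 0 := by
    have hAm : A ^ m = 0 := by
      rw [← Nat.add_sub_cancel' hm, pow_add, hAn, zero_mul]
    rw [hAdef, ← map_pow] at hAm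
    ext g
    have h2 : f ((a ^ m).coeff g) = 0 := by
      rw [← coeffRingHom_apply_coeff, hAm]
      rfl
    exact hf (h2.trans f.map_zero.symm)
  rw [ham, mul_zero, zero_mul]
  rfl
end

section
/- Let G be a finite group with |G| ≥ 2 and R an integral domain of prime characteristic p with p dividing |G| − 1. Then the element u = −∑_{g ∈ G, g ≠ 1} g of R[G] is a nonzero idempotent with zero coefficient at 1_G; consequently V_G is not a Mathieu subspace of R[G]. -/
theorem VG_not_mathieu_of_char_dvd {R G : Type*} [CommRing R] [IsDomain R]
    [Group G] [Fintype G] [DecidableEq G] (hG : 2 ≤ Fintype.card G) (p : ℕ) (hp : p.Prime)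
    [CharP R p] (hdvd : p ∣ Fintype.card G - 1) :
    (let u : MonoidAlgebra R G :=
      -∑ g ∈ Finset.univ.erase (1 : G), MonoidAlgebra.single g (1 : R)
    u ≠ 0 ∧ u ^ 2 = u ∧ u.coeff 1 = 0) ∧
    ¬ (∀ a b c : MonoidAlgebra R G, (∀ m : ℕ, 1 ≤ m → (a ^ m).coeff 1 = 0) →
      ∃ N : ℕ, ∀ m : ℕ, N ≤ m → (b * a ^ m * c).coeff 1 = 0) := by
  classical
  set u : MonoidAlgebra R G :=
    -∑ g ∈ Finset.univ.erase (1 : G), MonoidAlgebra.single g (1 : R) with hudef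
  set s : MonoidAlgebra R G := ∑ g : G, MonoidAlgebra.single g (1 : R) with hs
  -- card G = 1 in R
  have hcard : (Fintype.card G : R) = 1 := by
    obtain ⟨k, hk⟩ := hdvd
    have h1 : Fintype.card G = p * k + 1 := by omega
    rw [h1]
    push_cast
    simp [CharP.cast_eq_zero R p]
  -- s * single h 1 = s
  have hsg : ∀ h : G, s * MonoidAlgebra.single h (1 : R) = s := by
    intro h
    rw [hs, Finset.sum_mul]
    simp only [MonoidAlgebra.single_mul_single, mul_one]
    exact Fintype.sum_equiv (Equiv.mulRight h) _ _ (fun g => rfl)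
  have hss : s * s = s := by
    nth_rewrite 2 [hs]
    rw [Finset.mul_sum]
    simp only [hsg]
    rw [Finset.sum_const, Finset.card_univ, ← Nat.cast_smul_eq_nsmul R, hcard, one_smul]
  have hu : u = 1 - s := by
    have h2 : s = MonoidAlgebra.single (1 : G) (1 : R)
        + ∑ g ∈ Finset.univ.erase (1 : G), MonoidAlgebra.single g (1 : R) := by
      rw [hs]
      exact (Finset.add_sum_erase _ _ (Finset.mem_univ 1)).symm
    rw [MonoidAlgebra.one_def, hudef, h2]
    abel
  have hidem : u ^ 2 = u := by
    have h2 : (1 - s) ^ 2 = 1 - 2 * s + s * s := by noncomm_ring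
    rw [hu, h2, hss]
    noncomm_ring
  -- coefficient of s at any point is 1
  have hscoef : ∀ x : G, s.coeff x = 1 := by
    intro x
    rw [hs, MonoidAlgebra.coeff_sum, Finset.sum_apply']
    simp [Finsupp.single_apply]
  have hucoef : ∀ x : G, x ≠ 1 → u.coeff x = -1 := by
    intro x hx
    rw [hu]
    rw [MonoidAlgebra.coeff_sub, Finsupp.sub_apply, hscoef, MonoidAlgebra.one_def,
      MonoidAlgebra.coeff_single, Finsupp.single_apply,
      if_neg (fun h => hx h.symm)]
    ring
  have hu1 : u.coeff 1 = 0 := by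
    rw [hu, MonoidAlgebra.coeff_sub, Finsupp.sub_apply, hscoef, MonoidAlgebra.one_def,
      MonoidAlgebra.coeff_single, Finsupp.single_apply, if_pos rfl]
    ring
  obtain ⟨g, hg⟩ := Fintype.exists_ne_of_one_lt_card (by omega) (1 : G)
  have hune : u ≠ 0 := by
    intro h
    have := hucoef g hg
    rw [h] at this
    simp at this
  have hupow : ∀ m : ℕ, 1 ≤ m → u ^ m = u := by
    intro m hm
    induction m with
    | zero => omega
    | succ n ih =>
      rcases Nat.eq_zero_or_pos n with h | h
      · subst h; simp
      · rw [pow_succ, ih h, ← sq, hidem]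
  refine ⟨⟨hune, hidem, hu1⟩, ?_⟩

  intro H
  obtain ⟨N, hN⟩ := H u (MonoidAlgebra.single g⁻¹ (1 : R)) 1
    (fun m hm => by rw [hupow m hm]; exact hu1)
  have hm : max N 1 ≥ N := le_max_left _ _
  have := hN (max N 1) hm
  rw [hupow (max N 1) (le_max_right _ _), mul_one,
    MonoidAlgebra.coeff_single_mul_apply, one_mul, inv_inv, mul_one] at this
  rw [hucoef g hg] at this
  simp at this
end

section
/- Let R be a commutative ring, G a group (not necessarily finite), and H a subgroup of G. If V_G (elements of R[G] with zero coefficient at 1_G) is a Mathieu subspace of R[G], then V_H is a Mathieu subspace of R[H]. -/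
theorem subgroup_mathieu {R G : Type*} [CommRing R] [Group G] (H : Subgroup G)
    (hM : ∀ a b c : MonoidAlgebra R G, (∀ m : ℕ, 1 ≤ m → (a ^ m).coeff 1 = 0) →
      ∃ N : ℕ, ∀ m : ℕ, N ≤ m → (b * a ^ m * c).coeff 1 = 0) :
    ∀ a b c : MonoidAlgebra R H, (∀ m : ℕ, 1 ≤ m → (a ^ m).coeff 1 = 0) →
      ∃ N : ℕ, ∀ m : ℕ, N ≤ m → (b * a ^ m * c).coeff 1 = 0 := by
  intro a b c ha
  set φ := MonoidAlgebra.mapDomainRingHom R H.subtype with hφ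
  have hinj : Function.Injective (H.subtype : H →* G) := H.subtype_injective
  have key : ∀ x : MonoidAlgebra R H, (φ x).coeff 1 = x.coeff 1 := by
    intro x
    have : (φ x).coeff (H.subtype 1) = x.coeff 1 := Finsupp.mapDomain_apply hinj x.coeff 1
    simpa using this
  obtain ⟨N, hN⟩ := hM (φ a) (φ b) (φ c) (by
    intro m hm
    rw [← map_pow, key]
    exact ha m hm)
  exact ⟨N, fun m hm => by
    have := hN m hm
    rw [← map_pow, ← map_mul, ← map_mul, key] at this
    exact this⟩
end

section
/- Let R be an integral domain of prime characteristic p, and G a finite abelian group of order d with p ∤ d, such that R contains a primitive d-th root of unity. If p ≤ d, then V_G (the elements of R[G] with zero coefficient at the identity) is not a Mathieu subspace of R[G]. -/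
open Finset

section aux

variable {R G : Type*} [CommRing R] [CommGroup G] [Fintype G]

/-- The un-normalized idempotent attached to a character. -/
noncomputable def Echar (f : G →* R) : MonoidAlgebra R G :=
  ∑ g : G, MonoidAlgebra.single g (f g⁻¹)

lemma Echar_apply (f : G →* R) (x : G) : (Echar f).coeff x = f x⁻¹ := by
  classical
  rw [Echar, MonoidAlgebra.coeff_sum, Finsupp.finset_sum_apply]
  simp only [MonoidAlgebra.coeff_single, Finsupp.single_apply]
  rw [Finset.sum_ite_eq' univ x (fun g => f g⁻¹)]
  rw [if_pos (Finset.mem_univ x)]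

lemma single_mul_Echar (g : G) (r : R) (h : G →* R) :
    MonoidAlgebra.single g r * Echar h = (r * h g) • Echar h := by
  classical
  rw [Echar, Finset.mul_sum, Finset.smul_sum]
  refine Fintype.sum_equiv (Equiv.mulLeft g) _ _ fun k => ?_
  rw [MonoidAlgebra.single_mul_single, MonoidAlgebra.smul_single']
  have he : Equiv.mulLeft g k = g * k := rfl
  rw [he]
  congr 1
  have h1 : h g * h g⁻¹ = 1 := by rw [← map_mul, mul_inv_cancel, map_one]
  rw [mul_inv_rev, map_mul]
  linear_combination (-(r * h k⁻¹)) * h1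

lemma Echar_mul (f h : G →* R) :
    Echar f * Echar h = (∑ g : G, f g⁻¹ * h g) • Echar h := by
  classical
  conv_lhs => rw [Echar]
  rw [Finset.sum_mul]
  simp_rw [single_mul_Echar]
  rw [← Finset.sum_smul]

end aux

theorem VG_not_mathieu_of_char_le_card {R G : Type*} [CommRing R] [IsDomain R]
    [CommGroup G] [Fintype G] (p : ℕ) (hp : p.Prime) [CharP R p]
    (hpd : ¬ p ∣ Fintype.card G) (ξ : R) (hξ : IsPrimitiveRoot ξ (Fintype.card G))
    (hle : p ≤ Fintype.card G) :
    ¬ (∀ a b c : MonoidAlgebra R G, (∀ m : ℕ, 1 ≤ m → (a ^ m).coeff 1 = 0) →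
      ∃ N : ℕ, ∀ m : ℕ, N ≤ m → (b * a ^ m * c).coeff 1 = 0) := by
  classical
  intro H
  haveI : NeZero p := ⟨hp.pos.ne'⟩
  set d := Fintype.card G with hd
  haveI : NeZero d := ⟨Fintype.card_ne_zero⟩
  haveI hEnough : HasEnoughRootsOfUnity R d := ⟨⟨ξ, hξ⟩, inferInstance⟩
  haveI : HasEnoughRootsOfUnity R (Monoid.exponent G) :=
    HasEnoughRootsOfUnity.of_dvd R Group.exponent_dvd_card
  obtain ⟨e⟩ := CommGroup.monoidHom_mulEquiv_of_hasEnoughRootsOfUnity G R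
  -- `p` distinct unit-valued characters
  let χu : Fin p → (G →* Rˣ) := fun i => e.symm ((Fintype.equivFin G).symm (Fin.castLE hle i))
  have hχu : Function.Injective χu := by
    intro i j hij
    have := e.symm.injective hij
    have := (Fintype.equivFin G).symm.injective this
    exact Fin.castLE_injective hle this
  let χ : Fin p → (G →* R) := fun i => (Units.coeHom R).comp (χu i)
  have hSdiag : ∀ i, (∑ g : G, χ i g⁻¹ * χ i g) = (d : R) := by
    intro i
    have h1 : ∀ g : G, χ i g⁻¹ * χ i g = 1 := by
      intro g
      show ((χu i g⁻¹ : Rˣ) : R) * ((χu i g : Rˣ) : R) = 1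
      rw [← Units.val_mul, ← map_mul, inv_mul_cancel, map_one, Units.val_one]
    simp only [h1]
    simp [hd]
  have hSoff : ∀ i j, i ≠ j → (∑ g : G, χ i g⁻¹ * χ j g) = 0 := by
    intro i j hij
    set ψ : G →* Rˣ := (χu i)⁻¹ * χu j with hψ
    have hψne : (Units.coeHom R).comp ψ ≠ 1 := by
      intro hc
      apply hχu.ne hij
      ext g
      have hg := congrArg (fun φ : G →* R => φ g) hc
      simp only [MonoidHom.coe_comp, Function.comp_apply, MonoidHom.one_apply] at hg
      have h1 : ψ g = 1 := Units.ext (by simpa using hg)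
      rw [hψ, MonoidHom.mul_apply, MonoidHom.inv_apply, inv_mul_eq_one] at h1
      exact congrArg Units.val h1
    have h0 := sum_hom_units_eq_zero ((Units.coeHom R).comp ψ) hψne
    rw [← h0]
    refine Finset.sum_congr rfl fun g _ => ?_
    show ((χu i g⁻¹ : Rˣ) : R) * ((χu j g : Rˣ) : R) = ((ψ g : Rˣ) : R)
    rw [map_inv, hψ]
    simp
  -- the element a
  set E : Fin p → MonoidAlgebra R G := fun i => Echar (χ i) with hE
  set a : MonoidAlgebra R G := ∑ i : Fin p, E i with ha
  have hmulE : ∀ i, a * E i = (d : R) • E i := by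
    intro i
    rw [ha, Finset.sum_mul]
    have step : ∀ j ∈ univ, E j * E i = (if j = i then (d : R) else 0) • E i := by
      intro j _
      rw [hE, Echar_mul]
      by_cases hji : j = i
      · subst hji; rw [hSdiag, if_pos rfl]
      · rw [hSoff j i hji, if_neg hji]
    rw [Finset.sum_congr rfl step, ← Finset.sum_smul, Finset.sum_ite_eq' univ i]
    simp
  have haa : a * a = (d : R) • a := by
    conv_lhs => rw [ha, Finset.mul_sum]
    rw [Finset.sum_congr rfl fun i _ => hmulE i, ← Finset.smul_sum, ← ha]
  have hpow : ∀ m : ℕ, a ^ (m + 1) = ((d : R) ^ m) • a := by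
    intro m
    induction m with
    | zero => simp
    | succ k ih =>
        rw [pow_succ, ih, smul_mul_assoc, haa, smul_smul, ← pow_succ]
  have haone : a.coeff 1 = 0 := by
    rw [ha, MonoidAlgebra.coeff_sum, Finsupp.finset_sum_apply]
    have : ∀ i : Fin p, (E i).coeff (1 : G) = 1 := by
      intro i
      rw [hE, Echar_apply]
      simp
    simp only [this, Finset.sum_const, Finset.card_univ, Fintype.card_fin, nsmul_eq_mul, mul_one]
    exact CharP.cast_eq_zero R p
  have hE0a : E 0 * a = (d : R) • E 0 := by
    rw [ha, Finset.mul_sum]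
    have step : ∀ i ∈ univ, E 0 * E i = (if i = 0 then (d : R) else 0) • E 0 := by
      intro i _
      by_cases hi : i = 0
      · subst hi; rw [hE, Echar_mul, hSdiag, if_pos rfl]
      · rw [hE, Echar_mul, hSoff 0 i (Ne.symm hi), if_neg hi, zero_smul, zero_smul]
    rw [Finset.sum_congr rfl step, ← Finset.sum_smul, Finset.sum_ite_eq' univ 0]
    simp
  have hdR : (d : R) ≠ 0 := by
    intro hc
    exact hpd ((CharP.cast_eq_zero_iff R p d).mp hc)
  obtain ⟨N, hN⟩ := H a (E 0) 1 (by
    intro m hm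
    obtain ⟨k, rfl⟩ := Nat.exists_eq_add_of_le hm
    rw [add_comm, hpow k, MonoidAlgebra.coeff_smul_apply, haone, smul_zero])
  have hval := hN (N + 1) (Nat.le_succ N)
  rw [mul_one, hpow N, mul_smul_comm, hE0a, smul_smul, MonoidAlgebra.coeff_smul_apply] at hval
  have hE01 : (E 0).coeff (1 : G) = 1 := by rw [hE, Echar_apply]; simp
  rw [hE01, smul_eq_mul, mul_one] at hval
  exact (mul_ne_zero (pow_ne_zero N hdR) hdR) hval
end
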